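/- With the reduced star product at a complex number ℏ ∉ {1/k : k ∈ ℕ} ∪ {0}, for fixed P,Q,R,S ∈ ℕ₀^{1+n} with |P|=|Q|, |R|=|S|, each structure coefficient ℏ ↦ sgn(T) · (1/ℏ)^(↓|Q+R-T|) / ( (1/ℏ)^(↓|Q|) (1/ℏ)^(↓|R|) ) · T! C(Q,T) C(R,T) is a rational function of ℏ whose limit as ℏ → 0 is nonzero only for T = 0, where it equals 1. -/

import Mathlib

open scoped BigOperators

def StarDomain : Set ℂ := {h : ℂ | h ≠ 0 ∧ ∀ k : ℕ, 1 ≤ k → h ≠ 1 / (k : ℂ)}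

private theorem rsc_key (h : ℂ) (h0 : h ≠ 0) (N : ℕ) :
    ∏ j ∈ Finset.range N, (h⁻¹ - (j : ℂ)) =
      (∏ j ∈ Finset.range N, ((1 : ℂ) - j * h)) / h ^ N := by
  have : ∀ j ∈ Finset.range N, h⁻¹ - (j : ℂ) = ((1 : ℂ) - j * h) / h := by
    intro j _; field_simp
  rw [Finset.prod_congr rfl this, Finset.prod_div_distrib, Finset.prod_const,
    Finset.card_range]

private theorem rsc_fac (h : ℂ) (hh : h ∈ StarDomain) (j : ℕ) :
    (1 : ℂ) - j * h ≠ 0 := by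
  rcases Nat.eq_zero_or_pos j with hj | hj
  · simp [hj]
  · intro hcontra
    have hjC : (j : ℂ) ≠ 0 := Nat.cast_ne_zero.mpr hj.ne'
    apply hh.2 j hj
    field_simp
    linear_combination -hcontra

theorem reduced_star_coefficient_rational_and_limit
    (n : ℕ) (ν : Fin (n + 1) → ℤ) (hν : ∀ k, ν k = 1 ∨ ν k = -1)
    (P Q R S T : Fin (n + 1) → ℕ)
    (hPQ : ∑ k, P k = ∑ k, Q k) (hRS : ∑ k, R k = ∑ k, S k)
    (hT : ∀ k, T k ≤ min (Q k) (R k)) :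
    (∃ p q : Polynomial ℂ, ∀ h ∈ StarDomain,
        Polynomial.eval h q ≠ 0 ∧
        ((∏ k, ((ν k : ℂ)) ^ (T k))
            * (∏ j ∈ Finset.range (∑ k, (Q k + R k - T k)), (h⁻¹ - (j : ℂ)))
            / ((∏ j ∈ Finset.range (∑ k, Q k), (h⁻¹ - (j : ℂ)))
                * (∏ j ∈ Finset.range (∑ k, R k), (h⁻¹ - (j : ℂ))))
            * (∏ k, ((T k).factorial : ℂ)) * (∏ k, ((Q k).choose (T k) : ℂ))
            * (∏ k, ((R k).choose (T k) : ℂ)))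
          = Polynomial.eval h p / Polynomial.eval h q)
    ∧
    Filter.Tendsto
      (fun h : ℂ =>
        (∏ k, ((ν k : ℂ)) ^ (T k))
          * (∏ j ∈ Finset.range (∑ k, (Q k + R k - T k)), (h⁻¹ - (j : ℂ)))
          / ((∏ j ∈ Finset.range (∑ k, Q k), (h⁻¹ - (j : ℂ)))
              * (∏ j ∈ Finset.range (∑ k, R k), (h⁻¹ - (j : ℂ))))
          * (∏ k, ((T k).factorial : ℂ)) * (∏ k, ((Q k).choose (T k) : ℂ))
          * (∏ k, ((R k).choose (T k) : ℂ)))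
      (nhdsWithin 0 StarDomain)
      (nhds (if T = 0 then (1 : ℂ) else 0)) := by
  classical
  set a := ∑ k, Q k with ha
  set b := ∑ k, R k with hb
  set t := ∑ k, T k with ht
  set m := ∑ k, (Q k + R k - T k) with hmdef
  have hmt : m + t = a + b := by
    rw [hmdef, ht, ha, hb, ← Finset.sum_add_distrib, ← Finset.sum_add_distrib]
    refine Finset.sum_congr rfl fun k _ => ?_
    have h1 := (hT k).trans (min_le_left _ _)
    omega
  set c : ℂ := (∏ k, ((ν k : ℂ)) ^ (T k)) * (∏ k, ((T k).factorial : ℂ))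
      * (∏ k, ((Q k).choose (T k) : ℂ)) * (∏ k, ((R k).choose (T k) : ℂ)) with hc
  set p : Polynomial ℂ := Polynomial.C c * Polynomial.X ^ t *
      ∏ j ∈ Finset.range m, (1 - Polynomial.C (j : ℂ) * Polynomial.X) with hp
  set q : Polynomial ℂ :=
      (∏ j ∈ Finset.range a, (1 - Polynomial.C (j : ℂ) * Polynomial.X)) *
      (∏ j ∈ Finset.range b, (1 - Polynomial.C (j : ℂ) * Polynomial.X)) with hq
  have hevalp : ∀ h : ℂ, Polynomial.eval h p
      = c * h ^ t * ∏ j ∈ Finset.range m, ((1 : ℂ) - j * h) := by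
    intro h; simp [hp, Polynomial.eval_prod]
  have hevalq : ∀ h : ℂ, Polynomial.eval h q
      = (∏ j ∈ Finset.range a, ((1 : ℂ) - j * h))
        * (∏ j ∈ Finset.range b, ((1 : ℂ) - j * h)) := by
    intro h; simp [hq, Polynomial.eval_prod]
  have hqne : ∀ h ∈ StarDomain, Polynomial.eval h q ≠ 0 := by
    intro h hh
    rw [hevalq]
    exact mul_ne_zero (Finset.prod_ne_zero_iff.mpr fun j _ => rsc_fac h hh j)
      (Finset.prod_ne_zero_iff.mpr fun j _ => rsc_fac h hh j)
  have heq : ∀ h ∈ StarDomain,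
      ((∏ k, ((ν k : ℂ)) ^ (T k))
          * (∏ j ∈ Finset.range m, (h⁻¹ - (j : ℂ)))
          / ((∏ j ∈ Finset.range a, (h⁻¹ - (j : ℂ)))
              * (∏ j ∈ Finset.range b, (h⁻¹ - (j : ℂ))))
          * (∏ k, ((T k).factorial : ℂ)) * (∏ k, ((Q k).choose (T k) : ℂ))
          * (∏ k, ((R k).choose (T k) : ℂ)))
        = Polynomial.eval h p / Polynomial.eval h q := by
    intro h hh
    have h0 : h ≠ 0 := hh.1
    have hPa : (∏ j ∈ Finset.range a, ((1 : ℂ) - j * h)) ≠ 0 :=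
      Finset.prod_ne_zero_iff.mpr fun j _ => rsc_fac h hh j
    have hPb : (∏ j ∈ Finset.range b, ((1 : ℂ) - j * h)) ≠ 0 :=
      Finset.prod_ne_zero_iff.mpr fun j _ => rsc_fac h hh j
    rw [rsc_key h h0, rsc_key h h0, rsc_key h h0, hevalp, hevalq]
    field_simp
    rw [hc]
    have e : h ^ m * h ^ t = h ^ a * h ^ b := by rw [← pow_add, ← pow_add, hmt]
    have e2 : ∏ x ∈ Finset.range m, (1 - h * (x : ℂ)) = ∏ x ∈ Finset.range m, (1 - (x : ℂ) * h) :=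
      Finset.prod_congr rfl fun x _ => by ring
    rw [e2]
    congr 1
    linear_combination (-((∏ k, ((ν k : ℂ)) ^ (T k)) * (∏ x ∈ Finset.range m, (1 - (x : ℂ) * h))
      * (∏ k, ((T k).factorial : ℂ)) * (∏ k, ((Q k).choose (T k) : ℂ))
      * (∏ k, ((R k).choose (T k) : ℂ)))) * e
  have hq0 : Polynomial.eval 0 q = 1 := by simp [hevalq]
  have hval : Polynomial.eval 0 p / Polynomial.eval 0 q = if T = 0 then (1 : ℂ) else 0 := by
    rw [hq0, div_one, hevalp]
    by_cases hT0 : T = 0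
    · have ht0 : t = 0 := by simp [ht, hT0]
      simp [hT0, ht0, hc]
    · have ht0 : t ≠ 0 := by
        intro h0
        apply hT0
        funext k
        exact (Finset.sum_eq_zero_iff.mp (ht.symm.trans h0)) k (Finset.mem_univ k)
      simp [hT0, zero_pow ht0]
  refine ⟨⟨p, q, fun h hh => ⟨hqne h hh, heq h hh⟩⟩, ?_⟩
  have cont : Filter.Tendsto (fun h : ℂ => Polynomial.eval h p / Polynomial.eval h q)
      (nhds 0) (nhds (Polynomial.eval 0 p / Polynomial.eval 0 q)) :=
    ((Polynomial.continuous p).continuousAt.div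
      (Polynomial.continuous q).continuousAt (by rw [hq0]; exact one_ne_zero))
  rw [← hval]
  refine (cont.mono_left nhdsWithin_le_nhds).congr' ?_
  filter_upwards [self_mem_nhdsWithin] with h hh
  exact (heq h hh).symm
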